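/- Let X ⊆ ℝ^d be nonempty, closed, convex, let f be convex and differentiable with u ∈ X, and let y = Π_X(x − η∇f(x)) for some x ∈ ℝ^d and η > 0. Then f(x) − f(u) ≤ (η/2)‖∇f(x)‖² + (1/(2η))‖x − u‖² − (1/(2η))‖y − u‖². -/

import Mathlib

open InnerProductSpace Set Filter Topology

/-- Gradient inequality for convex differentiable functions. -/
lemma aux_grad_ineq {E : Type*} [NormedAddCommGroup E] [InnerProductSpace ℝ E] [CompleteSpace E]
    (f : E → ℝ) (hconv : ConvexOn ℝ Set.univ f) (hdiff : Differentiable ℝ f)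
    (x u : E) : f x - f u ≤ ⟪gradient f x, x - u⟫_ℝ := by
  set g := gradient f x with hg
  have hF : HasFDerivAt f (InnerProductSpace.toDual ℝ E g) x :=
    hasGradientAt_iff_hasFDerivAt.mp (hdiff x).hasGradientAt
  set φ : ℝ → ℝ := fun t => f (x + t • (u - x)) with hφ
  have hline : HasDerivAt (fun t : ℝ => x + t • (u - x)) (u - x) 0 := by
    simpa using ((hasDerivAt_id (0 : ℝ)).smul_const (u - x)).const_add x
  have hφd : HasDerivAt φ (⟪g, u - x⟫_ℝ) 0 := by
    have := (show HasFDerivAt f ((InnerProductSpace.toDual ℝ E) g) ((fun t : ℝ => x + t • (u - x)) 0) by simpa using hF).comp_hasDerivAt (f := fun t : ℝ => x + t • (u - x)) 0 (by simpa using hline)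
    simpa [φ, InnerProductSpace.toDual_apply_apply, Function.comp_def] using this
  have hslope : ∀ t ∈ Set.Ioc (0 : ℝ) 1, slope φ 0 t ≤ f u - f x := by
    intro t ht
    have hcomb : φ t ≤ (1 - t) * f x + t * f u := by
      have := hconv.2 (Set.mem_univ x) (Set.mem_univ u)
        (by linarith [ht.1, ht.2] : (0:ℝ) ≤ 1 - t) (le_of_lt ht.1) (by ring)
      have hxeq : (1 - t) • x + t • u = x + t • (u - x) := by
        module
      rw [hxeq] at this
      simpa [φ, smul_eq_mul] using this
    have hφ0 : φ 0 = f x := by simp [φ]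
    rw [slope_def_field, hφ0, sub_zero, div_le_iff₀ ht.1]
    nlinarith [ht.1]
  have hT : Tendsto (slope φ 0) (𝓝[>] 0) (𝓝 (⟪g, u - x⟫_ℝ)) :=
    (hasDerivAt_iff_tendsto_slope.mp hφd).mono_left
      (nhdsWithin_mono _ (fun t ht => ne_of_gt ht))
  have hle : ⟪g, u - x⟫_ℝ ≤ f u - f x := by
    refine le_of_tendsto hT ?_
    filter_upwards [Ioc_mem_nhdsGT_of_mem (by norm_num : (0:ℝ) ∈ Set.Ico 0 1)] with t ht
    exact hslope t ht
  have : ⟪g, x - u⟫_ℝ = -⟪g, u - x⟫_ℝ := by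
    rw [← inner_neg_right, neg_sub]
  linarith [hle, this]

/-- Projected gradient step inequality for convex functions. -/
theorem stmt_8 {d : ℕ}
    (X : Set (EuclideanSpace ℝ (Fin d)))
    (hXne : X.Nonempty) (hXc : IsClosed X) (hXv : Convex ℝ X)
    (f : EuclideanSpace ℝ (Fin d) → ℝ)
    (hconv : ConvexOn ℝ Set.univ f)
    (hdiff : Differentiable ℝ f)
    (x y u : EuclideanSpace ℝ (Fin d)) (η : ℝ) (hη : 0 < η)
    (hu : u ∈ X)
    (hyX : y ∈ X)
    (hyproj : ∀ w ∈ X, dist y (x - η • gradient f x) ≤ dist w (x - η • gradient f x)) :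
    f x - f u ≤ (η / 2) * ‖gradient f x‖ ^ 2
      + (1 / (2 * η)) * ‖x - u‖ ^ 2 - (1 / (2 * η)) * ‖y - u‖ ^ 2 := by
  haveI : Nonempty X := hXne.to_subtype
  set g := gradient f x with hg
  set z := x - η • g with hz
  have hbdd : BddBelow (Set.range fun w : X => ‖z - (w : EuclideanSpace ℝ (Fin d))‖) :=
    ⟨0, fun _ ⟨w, hw⟩ => hw ▸ norm_nonneg _⟩
  have hinf : ‖z - y‖ = ⨅ w : X, ‖z - (w : EuclideanSpace ℝ (Fin d))‖ := by
    refine le_antisymm (le_ciInf fun w => ?_) (ciInf_le hbdd ⟨y, hyX⟩)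
    have := hyproj w w.2
    simpa [dist_eq_norm, norm_sub_rev] using this
  have hobt : ⟪z - y, u - y⟫_ℝ ≤ 0 :=
    (norm_eq_iInf_iff_real_inner_le_zero hXv hyX).mp hinf u hu
  have hkey : ‖y - u‖ ^ 2 ≤ ‖z - u‖ ^ 2 := by
    have hsum : z - u = (z - y) + (y - u) := by abel
    have hexp : ‖z - u‖ ^ 2 = ‖z - y‖ ^ 2 + 2 * ⟪z - y, y - u⟫_ℝ + ‖y - u‖ ^ 2 := by
      rw [hsum]; exact norm_add_sq_real _ _
    have h2 : ⟪z - y, y - u⟫_ℝ = -⟪z - y, u - y⟫_ℝ := by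
      rw [← inner_neg_right, neg_sub]
    nlinarith [sq_nonneg ‖z - y‖]
  have hzu : z - u = (x - u) - η • g := by rw [hz]; abel
  have hexpand : ‖z - u‖ ^ 2 = ‖x - u‖ ^ 2 - 2 * η * ⟪g, x - u⟫_ℝ + η ^ 2 * ‖g‖ ^ 2 := by
    rw [hzu, norm_sub_sq_real, real_inner_smul_right, norm_smul, real_inner_comm]
    simp [abs_of_pos hη, mul_pow]
    ring
  have hgrad : f x - f u ≤ ⟪g, x - u⟫_ℝ := aux_grad_ineq f hconv hdiff x u
  have h2η : (0:ℝ) < 2 * η := by linarith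
  calc f x - f u ≤ (η ^ 2 * ‖g‖ ^ 2 + ‖x - u‖ ^ 2 - ‖y - u‖ ^ 2) / (2 * η) := by
        rw [le_div_iff₀ h2η]; nlinarith [hkey, hexpand, hgrad, hη]
    _ = (η / 2) * ‖g‖ ^ 2 + (1 / (2 * η)) * ‖x - u‖ ^ 2 - (1 / (2 * η)) * ‖y - u‖ ^ 2 := by
        field_simp
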